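/- Let Φ be the standard normal cumulative distribution function, D > 0, S > 0, γ ≥ 1, ε > 0, and let C = {(x,y) : x > D, y > S, x − D ≤ 3√y}. If (x*, y*) ∈ C and (x'', y'') ∈ C satisfy |log x* − log x''| ≤ γ log(1+ε) and |log y* − log y''| ≤ γ log(1+ε), then Φ((D−x*)/√y*) ≤ (1+ε)^{6.568(3 + D/√S)γ} · Φ((D−x'')/√y''). -/

import Mathlib

namespace Stmt16

/-- The standard normal cumulative distribution function
`Φ(x) = (2π)^{-1/2} ∫_{-∞}^x e^{-t²/2} dt`. -/
noncomputable def Phi (x : ℝ) : ℝ :=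
  (2 * Real.pi) ^ (-(1 / 2) : ℝ) * ∫ t in Set.Iic x, Real.exp (-t ^ 2 / 2)

open MeasureTheory Real Set Filter

noncomputable def phi (t : ℝ) : ℝ := Real.exp (-t ^ 2 / 2)

noncomputable def Iint (z : ℝ) : ℝ := ∫ t in Set.Iic z, phi t

lemma phi_pos (t : ℝ) : 0 < phi t := Real.exp_pos _

lemma phi_le_one (t : ℝ) : phi t ≤ 1 := by
  rw [phi]
  apply Real.exp_le_one_iff.mpr
  nlinarith [sq_nonneg t]

lemma continuous_phi : Continuous phi := by
  unfold phi; fun_prop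

lemma integrable_phi : Integrable phi := by
  have h := integrable_exp_neg_mul_sq (show (0:ℝ) < 1/2 by norm_num)
  refine h.congr ?_
  filter_upwards with t
  rw [phi]; ring_nf

lemma hasDerivAt_phi (t : ℝ) : HasDerivAt phi (-t * phi t) t := by
  have h1 : HasDerivAt (fun t : ℝ => -t ^ 2 / 2) (-t) t := by
    have := ((hasDerivAt_pow 2 t).neg).div_const 2
    refine this.congr_deriv ?_
    ring
  have := h1.exp
  refine this.congr_deriv ?_
  rw [phi]; ring

noncomputable def g (t : ℝ) : ℝ := -t / (t ^ 2 + 1) * phi t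

noncomputable def gd (t : ℝ) : ℝ := phi t * ((t ^ 4 + 2 * t ^ 2 - 1) / (t ^ 2 + 1) ^ 2)

lemma denom_pos (t : ℝ) : (0:ℝ) < t ^ 2 + 1 := by positivity

lemma hasDerivAt_g (t : ℝ) : HasDerivAt g (gd t) t := by
  have h2 : HasDerivAt (fun t : ℝ => t ^ 2 + 1) (2 * t) t := by
    simpa using (hasDerivAt_pow 2 t).add_const 1
  have h1 : HasDerivAt (fun t : ℝ => -t / (t ^ 2 + 1))
      (((-1) * (t ^ 2 + 1) - (-t) * (2 * t)) / (t ^ 2 + 1) ^ 2) t :=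
    (hasDerivAt_id t).neg.div h2 (denom_pos t).ne'
  have := h1.mul (hasDerivAt_phi t)
  refine this.congr_deriv ?_
  rw [gd, phi]
  field_simp
  ring

end Stmt16

namespace Stmt16
open MeasureTheory Real Set Filter

lemma abs_g_le (t : ℝ) : ‖g t‖ ≤ phi t := by
  rw [g, Real.norm_eq_abs, abs_mul, abs_of_pos (phi_pos t)]
  have h1 : |(-t) / (t ^ 2 + 1)| ≤ 1 := by
    rw [abs_div, abs_neg, abs_of_pos (denom_pos t), div_le_one (denom_pos t)]
    nlinarith [sq_abs t, sq_nonneg (|t| - 1), abs_nonneg t]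
  nlinarith [phi_pos t, abs_nonneg ((-t) / (t^2+1))]

lemma tendsto_phi_atBot : Tendsto phi atBot (nhds 0) := by
  have h1 : Tendsto (fun t : ℝ => -t ^ 2 / 2) atBot atBot := by
    apply Tendsto.atBot_div_const (by norm_num : (0:ℝ) < 2)
    have hsq : Tendsto (fun t : ℝ => t ^ 2) atBot atTop := by
      have h0 : Tendsto (fun t : ℝ => t) atBot atBot := tendsto_id
      have := h0.atBot_mul_atBot₀ h0
      refine this.congr fun t => ?_
      simp [sq]
    exact (tendsto_neg_atTop_atBot).comp hsq
  exact Real.tendsto_exp_atBot.comp h1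

end Stmt16

namespace Stmt16
open MeasureTheory Real Set Filter

lemma tendsto_g_atBot : Tendsto g atBot (nhds 0) := by
  have h := squeeze_zero_norm (fun t => abs_g_le t) tendsto_phi_atBot
  exact h

lemma abs_gd_le (t : ℝ) : ‖gd t‖ ≤ ‖phi t‖ := by
  rw [gd, norm_mul, Real.norm_eq_abs, Real.norm_eq_abs, abs_of_pos (phi_pos t)]
  have h1 : |(t ^ 4 + 2 * t ^ 2 - 1) / (t ^ 2 + 1) ^ 2| ≤ 1 := by
    rw [abs_div, abs_of_pos (pow_pos (denom_pos t) 2), div_le_one (pow_pos (denom_pos t) 2)]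
    rw [abs_le]
    constructor <;> nlinarith [sq_nonneg t, sq_nonneg (t^2)]
  nlinarith [phi_pos t, abs_nonneg ((t ^ 4 + 2 * t ^ 2 - 1) / (t ^ 2 + 1) ^ 2)]

lemma continuous_gd : Continuous gd := by
  unfold gd phi
  apply Continuous.mul (by fun_prop)
  apply Continuous.div (by fun_prop) (by fun_prop)
  intro t
  positivity

lemma integrable_gd : Integrable gd :=
  integrable_phi.mono continuous_gd.aestronglyMeasurable (ae_of_all _ abs_gd_le)

lemma integral_gd (z : ℝ) : ∫ t in Set.Iic z, gd t = g z := by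
  have h := integral_Iic_of_hasDerivAt_of_tendsto (f := g) (f' := gd) (a := z) (m := 0)
    (hasDerivAt_g z).continuousAt.continuousWithinAt
    (fun x _ => hasDerivAt_g x) integrable_gd.integrableOn tendsto_g_atBot
  rw [h, sub_zero]

lemma g_le_Iint (z : ℝ) : g z ≤ Iint z := by
  have h : Iint z - g z = ∫ t in Set.Iic z, (phi t - gd t) := by
    rw [integral_sub integrable_phi.integrableOn integrable_gd.integrableOn, Iint, integral_gd]
  have h2 : 0 ≤ ∫ t in Set.Iic z, (phi t - gd t) := by
    apply setIntegral_nonneg measurableSet_Iic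
    intro t _
    have : phi t - gd t = phi t * (2 / (t ^ 2 + 1) ^ 2) := by
      rw [gd]
      field_simp
      ring
    rw [this]
    have := phi_pos t
    positivity
  linarith

lemma Iint_nonneg (z : ℝ) : 0 ≤ Iint z :=
  setIntegral_nonneg measurableSet_Iic (fun t _ => (phi_pos t).le)

lemma Iint_mono {a b : ℝ} (h : a ≤ b) : Iint a ≤ Iint b := by
  apply setIntegral_mono_set integrable_phi.integrableOn
    (ae_of_all _ (fun t => (phi_pos t).le))
  exact HasSubset.Subset.eventuallyLE (Iic_subset_Iic.mpr h)

lemma Iint_pos (z : ℝ) : 0 < Iint z := by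
  have h : Iint z - Iint (z - 1) = ∫ t in (z-1)..z, phi t := by
    rw [Iint, Iint, intervalIntegral.integral_Iic_sub_Iic integrable_phi.integrableOn
      integrable_phi.integrableOn]
  have h2 : 0 < ∫ t in (z-1)..z, phi t :=
    intervalIntegral.intervalIntegral_pos_of_pos (integrable_phi.intervalIntegrable)
      (fun t => phi_pos t) (by linarith)
  have := Iint_nonneg (z - 1)
  linarith

lemma hasDerivAt_Iint (z : ℝ) : HasDerivAt Iint (phi z) z := by
  have heq : Iint = fun u => Iint 0 + ∫ t in (0:ℝ)..u, phi t := by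
    funext u
    rw [← intervalIntegral.integral_Iic_sub_Iic integrable_phi.integrableOn
      integrable_phi.integrableOn]
    rw [Iint, Iint]
    ring
  rw [heq]
  apply HasDerivAt.const_add
  exact intervalIntegral.integral_hasDerivAt_right (integrable_phi.intervalIntegrable)
    (continuous_phi.stronglyMeasurableAtFilter _ _) continuous_phi.continuousAt

end Stmt16

namespace Stmt16
open MeasureTheory Real Set Filter

lemma ratio_bound {z : ℝ} (hz : z ∈ Set.Icc (-3:ℝ) 0) : phi z ≤ 67/20 * Iint z := by
  obtain ⟨h3, h0⟩ := hz
  rcases le_total z (-2/5) with hc | hc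
  · -- use g z lower bound
    have hg := g_le_Iint z
    have hkey : phi z ≤ 67/20 * g z := by
      rw [g]
      rw [show 67/20 * (-z / (z ^ 2 + 1) * phi z) = (67/20 * (-z) / (z ^ 2 + 1)) * phi z by ring]
      nth_rewrite 1 [show phi z = 1 * phi z by ring]
      apply mul_le_mul_of_nonneg_right _ (phi_pos z).le
      rw [le_div_iff₀ (denom_pos z)]
      nlinarith [mul_nonneg (show (0:ℝ) ≤ z + 3 by linarith) (show (0:ℝ) ≤ -2/5 - z by linarith)]
    linarith
  · -- z ∈ [-2/5, 0]
    have h1 : phi z ≤ 1 := phi_le_one z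
    have h2 : (46:ℝ)/145 ≤ Iint (-2/5) := by
      have hg := g_le_Iint (-2/5)
      have : (46:ℝ)/145 ≤ g (-2/5) := by
        rw [g, phi]
        have he : (1:ℝ) - 2/25 ≤ Real.exp (-(-2/5:ℝ) ^ 2 / 2) := by
          have := Real.add_one_le_exp (-(-2/5:ℝ) ^ 2 / 2)
          norm_num at this ⊢
          linarith
        norm_num at he ⊢
        nlinarith [Real.exp_pos (-(-2/5:ℝ) ^ 2 / 2)]
      linarith
    have h4 : Iint (-2/5) ≤ Iint z := Iint_mono hc
    linarith

lemma lip {a b : ℝ} (ha : a ∈ Set.Icc (-3:ℝ) 0) (hb : b ∈ Set.Icc (-3:ℝ) 0) (hba : b ≤ a) :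
    Iint a ≤ Real.exp (67/20 * (a - b)) * Iint b := by
  set F : ℝ → ℝ := fun z => Real.exp (-(67/20) * z) * Iint z with hF
  have hFd : ∀ z, HasDerivAt F (Real.exp (-(67/20) * z) * (phi z - 67/20 * Iint z)) z := by
    intro z
    have h1 : HasDerivAt (fun z : ℝ => Real.exp (-(67/20) * z))
        (Real.exp (-(67/20) * z) * (-(67/20))) z := by
      have := (hasDerivAt_id z).const_mul (-(67/20) : ℝ)
      simpa using (this.exp)
    have := h1.mul (hasDerivAt_Iint z)
    refine this.congr_deriv ?_
    ring
  have hanti : AntitoneOn F (Set.Icc (-3:ℝ) 0) := by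
    apply antitoneOn_of_deriv_nonpos (convex_Icc _ _)
    · exact fun z _ => ((hFd z).continuousAt).continuousWithinAt
    · exact fun z _ => ((hFd z).differentiableAt).differentiableWithinAt
    · intro z hz
      rw [interior_Icc] at hz
      rw [(hFd z).deriv]
      have hr := ratio_bound ⟨hz.1.le, hz.2.le⟩
      have := Real.exp_pos (-(67/20) * z)
      nlinarith
  have hle := hanti hb ha hba
  rw [hF] at hle
  simp only at hle
  have hepos := Real.exp_pos ((67/20) * a)
  have key : Real.exp (67/20 * a) * (Real.exp (-(67/20) * a) * Iint a) ≤
      Real.exp (67/20 * a) * (Real.exp (-(67/20) * b) * Iint b) :=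
    mul_le_mul_of_nonneg_left hle hepos.le
  calc Iint a = Real.exp (67/20 * a) * (Real.exp (-(67/20) * a) * Iint a) := by
        rw [← mul_assoc, ← Real.exp_add]
        norm_num
    _ ≤ Real.exp (67/20 * a) * (Real.exp (-(67/20) * b) * Iint b) := key
    _ = Real.exp (67/20 * (a - b)) * Iint b := by
        rw [← mul_assoc, ← Real.exp_add]
        ring_nf

end Stmt16

namespace Stmt16
open MeasureTheory Real Set Filter

lemma exp_small {k : ℝ} (h0 : 0 ≤ k) (h1 : k ≤ 5101/10000) :
    Real.exp k ≤ 1 + (130706/100000) * k := by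
  have habs : |k| ≤ 1 := by rw [abs_of_nonneg h0]; linarith
  have hb := Real.exp_bound habs (show 0 < 4 by norm_num)
  have hsum : ∑ m ∈ Finset.range 4, k ^ m / m.factorial = 1 + k + k^2/2 + k^3/6 := by
    norm_num [Finset.sum_range_succ, Nat.factorial]
    try ring
  rw [hsum] at hb
  rw [abs_of_nonneg h0] at hb
  have hb2 : Real.exp k ≤ 1 + k + k^2/2 + k^3/6 + k^4 * (5/(24*4)) := by
    have h5 : ((Nat.factorial 4 : ℕ) : ℝ) = 24 := by norm_num [Nat.factorial]
    rw [h5] at hb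
    have := (abs_le.mp hb).2
    push_cast at this
    norm_num at this ⊢
    linarith
  nlinarith [pow_nonneg h0 2, pow_nonneg h0 3, pow_nonneg h0 4,
    mul_nonneg (mul_nonneg h0 h0) (sub_nonneg.mpr h1)]

end Stmt16

namespace Stmt16

lemma Phi_eq (x : ℝ) : Phi x = (2 * Real.pi) ^ (-(1 / 2) : ℝ) * Iint x := rfl

set_option maxHeartbeats 1000000 in
/-- First case in the proof of Theorem 3: on the region
`C = {(x,y) : x > D, y > S, x − D ≤ 3√y}`, coordinatewise multiplicative error
`(1+ε)^γ` translates into the objective approximation factor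
`(1+ε)^{6.568(3 + D/√S)γ}` for the deadline objective `Φ((D−x)/√y)`. -/
theorem stmt_16 (D S γ ε : ℝ) (hD : 0 < D) (hS : 0 < S) (hγ : 1 ≤ γ) (hε : 0 < ε)
    (xs ys x'' y'' : ℝ)
    (hxs : D < xs) (hys : S < ys) (hCs : xs - D ≤ 3 * Real.sqrt ys)
    (hx'' : D < x'') (hy'' : S < y'') (hC'' : x'' - D ≤ 3 * Real.sqrt y'')
    (hx : |Real.log xs - Real.log x''| ≤ γ * Real.log (1 + ε))
    (hy : |Real.log ys - Real.log y''| ≤ γ * Real.log (1 + ε)) :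
    Phi ((D - xs) / Real.sqrt ys) ≤
      (1 + ε) ^ (6.568 * (3 + D / Real.sqrt S) * γ) *
        Phi ((D - x'') / Real.sqrt y'') := by
  have h1ε : (0:ℝ) < 1 + ε := by linarith
  have hlog : 0 < Real.log (1 + ε) := Real.log_pos (by linarith)
  set k := γ * Real.log (1 + ε) with hkdef
  have hk : 0 < k := mul_pos (lt_of_lt_of_le one_pos hγ) hlog
  have hSpos : 0 < Real.sqrt S := Real.sqrt_pos.mpr hS
  have hyspos : 0 < ys := lt_trans hS hys
  have hy''pos : 0 < y'' := lt_trans hS hy''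
  have hxspos : 0 < xs := lt_trans hD hxs
  have hx''pos : 0 < x'' := lt_trans hD hx''
  set A := Real.sqrt ys with hAdef
  set B := Real.sqrt y'' with hBdef
  have hApos : 0 < A := Real.sqrt_pos.mpr hyspos
  have hBpos : 0 < B := Real.sqrt_pos.mpr hy''pos
  have hSA : Real.sqrt S ≤ A := Real.sqrt_le_sqrt hys.le
  set c := 3 + D / Real.sqrt S with hcdef
  have hc3 : 3 ≤ c := by
    have h : 0 ≤ D / Real.sqrt S := by positivity
    rw [hcdef]
    linarith
  set zs := (D - xs) / A with hzsdef
  set z2 := (D - x'') / B with hz2def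
  clear_value k A B c zs z2
  have hzs_mem : zs ∈ Set.Icc (-3:ℝ) 0 := by
    constructor
    · rw [hzsdef, le_div_iff₀ hApos]; linarith
    · rw [hzsdef]
      apply div_nonpos_of_nonpos_of_nonneg (by linarith) hApos.le
  have hz2_mem : z2 ∈ Set.Icc (-3:ℝ) 0 := by
    constructor
    · rw [hz2def, le_div_iff₀ hBpos]; linarith
    · rw [hz2def]
      apply div_nonpos_of_nonpos_of_nonneg (by linarith) hBpos.le
  -- multiplicative closeness
  have hx2k : x'' ≤ xs * Real.exp k := by
    have h1 := (abs_le.mp hx).1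
    have h2 : Real.log x'' ≤ Real.log xs + k := by linarith
    calc x'' = Real.exp (Real.log x'') := (Real.exp_log hx''pos).symm
      _ ≤ Real.exp (Real.log xs + k) := Real.exp_le_exp.mpr h2
      _ = xs * Real.exp k := by rw [Real.exp_add, Real.exp_log hxspos]
  have hyk : ys ≤ y'' * Real.exp k := by
    have h1 := (abs_le.mp hy).2
    have h2 : Real.log ys ≤ Real.log y'' + k := by linarith
    calc ys = Real.exp (Real.log ys) := (Real.exp_log hyspos).symm
      _ ≤ Real.exp (Real.log y'' + k) := Real.exp_le_exp.mpr h2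
      _ = y'' * Real.exp k := by rw [Real.exp_add, Real.exp_log hy''pos]
  have hABk : A ≤ B * Real.exp (k/2) := by
    have hsq : Real.sqrt (Real.exp k) = Real.exp (k/2) := by
      rw [show Real.exp k = Real.exp (k/2) ^ 2 by rw [sq, ← Real.exp_add]; ring_nf]
      exact Real.sqrt_sq (Real.exp_pos _).le
    rw [hAdef, hBdef]
    calc Real.sqrt ys ≤ Real.sqrt (y'' * Real.exp k) := Real.sqrt_le_sqrt hyk
      _ = Real.sqrt y'' * Real.exp (k/2) := by rw [Real.sqrt_mul hy''pos.le, hsq]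
  have hxsA : xs / A ≤ c := by
    have h1 : (xs - D)/A ≤ 3 := (div_le_iff₀ hApos).mpr (by linarith)
    have h2 : D / A ≤ D / Real.sqrt S := div_le_div_of_nonneg_left hD.le hSpos hSA
    calc xs / A = (xs - D)/A + D/A := by ring
      _ ≤ 3 + D / Real.sqrt S := add_le_add h1 h2
      _ = c := hcdef.symm
  have hekm1 : (0:ℝ) ≤ Real.exp k - 1 := by
    have := Real.one_le_exp hk.le
    linarith
  have hek2 : (1:ℝ) ≤ Real.exp (k/2) := Real.one_le_exp (by linarith)
  -- bound on zs - z2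
  have heq : zs - z2 = (x'' - xs)/A + (x'' - D) * (1/B - 1/A) := by
    rw [hzsdef, hz2def]
    field_simp
    ring
  have t1 : (x'' - xs)/A ≤ c * (Real.exp k - 1) := by
    have h1 : x'' - xs ≤ xs * (Real.exp k - 1) := by nlinarith
    calc (x'' - xs)/A ≤ (xs * (Real.exp k - 1))/A := (div_le_div_iff_of_pos_right hApos).mpr h1
      _ = (xs/A) * (Real.exp k - 1) := by ring
      _ ≤ c * (Real.exp k - 1) := mul_le_mul_of_nonneg_right hxsA hekm1
  have hhalf : Real.exp (k/2) - 1 ≤ (Real.exp k - 1)/2 := by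
    have hsq : Real.exp (k/2) * Real.exp (k/2) = Real.exp k := by
      rw [← Real.exp_add]; norm_num
    nlinarith [sq_nonneg (Real.exp (k/2) - 1)]
  have t2 : (x'' - D) * (1/B - 1/A) ≤ 3/2 * (Real.exp k - 1) := by
    have ht : (x'' - D) * (1/B - 1/A) ≤ 3 * (Real.exp (k/2) - 1) := by
      have h1 : 1/B - 1/A = (A - B)/(A*B) := by
        rw [div_sub_div _ _ hBpos.ne' hApos.ne', one_mul, mul_one, mul_comm B A]
      rw [h1, mul_div_assoc']
      rw [div_le_iff₀ (by positivity : (0:ℝ) < A*B)]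
      rcases le_total B A with hBA | hBA
      · have hAB2 : A - B ≤ B * (Real.exp (k/2) - 1) := by linarith [hABk]
        have c1 : (x'' - D) * (A - B) ≤ 3*B * (A - B) :=
          mul_le_mul_of_nonneg_right (by linarith) (by linarith)
        have c2 : 3*B * (A - B) ≤ 3*B * (B * (Real.exp (k/2) - 1)) :=
          mul_le_mul_of_nonneg_left hAB2 (by linarith)
        have c3 : 3*(B*B) * (Real.exp (k/2) - 1) ≤ 3*(A*B) * (Real.exp (k/2) - 1) := by
          apply mul_le_mul_of_nonneg_right _ (by linarith)
          have := mul_le_mul_of_nonneg_right hBA hBpos.le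
          linarith
        nlinarith [c1, c2, c3]
      · have p1 : (x'' - D) * (A - B) ≤ 0 :=
          mul_nonpos_of_nonneg_of_nonpos (by linarith) (by linarith)
        have p2 : (0:ℝ) ≤ 3 * (Real.exp (k/2) - 1) * (A*B) := by
          apply mul_nonneg (by linarith) (by positivity)
        linarith
    linarith
  have hdiff : zs - z2 ≤ (c + 3/2) * (Real.exp k - 1) := by
    rw [heq]; nlinarith
  have hd3 : zs - z2 ≤ 3 := by
    have := hzs_mem.2
    have := hz2_mem.1
    linarith
  -- the key exponent inequality
  have hexp : 67/20 * (zs - z2) ≤ 6.568 * c * k := by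
    rcases le_total k (5101/10000) with hks | hkl
    · have hes := exp_small hk.le hks
      have he1 : Real.exp k - 1 ≤ (130706/100000) * k := by linarith
      have hc0 : (0:ℝ) ≤ c + 3/2 := by linarith
      have s1 : zs - z2 ≤ (c + 3/2) * ((130706/100000) * k) :=
        le_trans hdiff (mul_le_mul_of_nonneg_left he1 hc0)
      nlinarith [mul_nonneg hk.le (sub_nonneg.mpr hc3)]
    · nlinarith [mul_nonneg (sub_nonneg.mpr hc3) hk.le]
  -- assemble
  set E := Real.log (1 + ε) * (6.568 * c * γ) with hEdef
  clear_value E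
  have hEeq : E = 6.568 * c * k := by rw [hEdef, hkdef]; ring
  have hEnn : 0 ≤ E := by
    rw [hEeq]
    nlinarith [mul_nonneg (show (0:ℝ) ≤ c by linarith) hk.le]
  have main : Iint zs ≤ Real.exp E * Iint z2 := by
    rcases le_total zs z2 with h | h
    · calc Iint zs ≤ Iint z2 := Iint_mono h
        _ ≤ Real.exp E * Iint z2 :=
          le_mul_of_one_le_left (Iint_nonneg _) (Real.one_le_exp hEnn)
    · calc Iint zs ≤ Real.exp (67/20 * (zs - z2)) * Iint z2 := lip hzs_mem hz2_mem h
        _ ≤ Real.exp E * Iint z2 := by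
          apply mul_le_mul_of_nonneg_right _ (Iint_nonneg _)
          apply Real.exp_le_exp.mpr
          rw [hEeq]
          exact hexp
  have hc0 : (0:ℝ) < (2 * Real.pi) ^ (-(1 / 2) : ℝ) :=
    Real.rpow_pos_of_pos (by positivity) _
  have hrpow : (1+ε) ^ (6.568 * c * γ) = Real.exp E := by
    rw [Real.rpow_def_of_pos h1ε, hEdef]
  calc Phi zs = (2 * Real.pi) ^ (-(1 / 2) : ℝ) * Iint zs := Phi_eq zs
    _ ≤ (2 * Real.pi) ^ (-(1 / 2) : ℝ) * (Real.exp E * Iint z2) :=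
        mul_le_mul_of_nonneg_left main hc0.le
    _ = Real.exp E * ((2 * Real.pi) ^ (-(1 / 2) : ℝ) * Iint z2) := by ring
    _ = (1+ε) ^ (6.568 * c * γ) * Phi z2 := by rw [hrpow, Phi_eq]

end Stmt16
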